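/- Let U : ℝ → M_n(ℂ) be a one-parameter family of matrices, let A be an n×n Hermitian matrix, and let t₀ ∈ ℝ be such that U is differentiable at t₀ with derivative U′(t₀) = i·A·U(t₀). Assume U(t₀) is unitary, the kernel of I − U(t₀) is one-dimensional, and let a be a unit vector with U(t₀) a = a. Then the function t ↦ det(I − U(t)) is differentiable at t₀ with derivative equal to −i · trace(adj(I − U(t₀))) · ⟨a, A a⟩. -/

import Mathlib

open Matrix Finset

theorem my_hasDerivAt_det {n : ℕ} (M : ℝ → Matrix (Fin n) (Fin n) ℂ)
    (M' : Matrix (Fin n) (Fin n) ℂ) (t₀ : ℝ)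
    (h : ∀ p q, HasDerivAt (fun t => M t p q) (M' p q) t₀) :
    HasDerivAt (fun t => (M t).det) ((M t₀).adjugate * M').trace t₀ := by
  have h1 : HasDerivAt
      (fun t => ∑ σ : Equiv.Perm (Fin n), ((Equiv.Perm.sign σ : ℤ) : ℂ) * ∏ i, M t (σ i) i)
      (∑ σ : Equiv.Perm (Fin n), ((Equiv.Perm.sign σ : ℤ) : ℂ) *
        ∑ p, (∏ j ∈ Finset.univ.erase p, M t₀ (σ j) j) • M' (σ p) p) t₀ := by
    apply HasDerivAt.fun_sum
    intro σ _
    exact (HasDerivAt.fun_finsetProd (fun i _ => h (σ i) i)).const_mul _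
  have e1 : (fun t => (M t).det)
      = fun t => ∑ σ : Equiv.Perm (Fin n), ((Equiv.Perm.sign σ : ℤ) : ℂ) * ∏ i, M t (σ i) i := by
    funext t; exact Matrix.det_apply' _
  rw [e1]
  convert h1 using 1
  have key : ∀ p : Fin n, ((M t₀).adjugate * M') p p
      = ((M t₀).updateCol p (fun k => M' k p)).det := by
    intro p
    have := Matrix.cramer_eq_adjugate_mulVec (M t₀) (fun k => M' k p)
    have h2 : Matrix.cramer (M t₀) (fun k => M' k p) p
        = ((M t₀).updateCol p (fun k => M' k p)).det := Matrix.cramer_apply _ _ _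
    rw [this] at h2
    rw [← h2]
    simp [Matrix.mulVec, Matrix.mul_apply, dotProduct]
  calc ((M t₀).adjugate * M').trace
      = ∑ p, ((M t₀).updateCol p (fun k => M' k p)).det := by
        rw [Matrix.trace]; exact Finset.sum_congr rfl fun p _ => key p
    _ = ∑ p : Fin n, ∑ σ : Equiv.Perm (Fin n), ((Equiv.Perm.sign σ : ℤ) : ℂ) *
          (M' (σ p) p * ∏ j ∈ Finset.univ.erase p, M t₀ (σ j) j) := by
        refine Finset.sum_congr rfl fun p _ => ?_
        rw [Matrix.det_apply']
        refine Finset.sum_congr rfl fun σ _ => ?_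
        congr 1
        rw [← Finset.mul_prod_erase _ _ (Finset.mem_univ p)]
        congr 1
        · simp [Matrix.updateCol_apply]
        · refine Finset.prod_congr rfl fun j hj => ?_
          simp [Matrix.updateCol_apply, (Finset.mem_erase.mp hj).1]
    _ = ∑ σ : Equiv.Perm (Fin n), ((Equiv.Perm.sign σ : ℤ) : ℂ) *
          ∑ p, (∏ j ∈ Finset.univ.erase p, M t₀ (σ j) j) • M' (σ p) p := by
        rw [Finset.sum_comm]
        refine Finset.sum_congr rfl fun σ _ => ?_
        rw [Finset.mul_sum]
        refine Finset.sum_congr rfl fun p _ => ?_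
        simp [smul_eq_mul]; ring

theorem my_adjugate_rank_one {n : ℕ} (M : Matrix (Fin n) (Fin n) ℂ)
    (hker : Module.finrank ℂ (LinearMap.ker M.mulVecLin) = 1)
    (a : Fin n → ℂ) (ha0 : a ≠ 0)
    (haM : M.mulVec a = 0) (haM' : Matrix.vecMul (star a) M = 0) :
    ∃ κ : ℂ, ∀ p q, M.adjugate p q = κ * (starRingEnd ℂ) (a q) * a p := by
  have hsa0 : star a ≠ 0 := by simpa using star_ne_zero.mpr ha0
  have hdet : M.det = 0 := by
    rw [← Matrix.exists_mulVec_eq_zero_iff]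
    exact ⟨a, ha0, haM⟩
  have hkerM : LinearMap.ker M.mulVecLin = Submodule.span ℂ {a} := by
    symm
    apply Submodule.eq_of_le_of_finrank_le
    · rw [Submodule.span_le, Set.singleton_subset_iff]
      simpa [LinearMap.mem_ker] using haM
    · rw [hker, finrank_span_singleton ha0]
  have hrk : Mᵀ.rank = M.rank := Matrix.rank_transpose M
  have hkT : Module.finrank ℂ (LinearMap.ker Mᵀ.mulVecLin) = 1 := by
    have e1 := LinearMap.finrank_range_add_finrank_ker M.mulVecLin
    have e2 := LinearMap.finrank_range_add_finrank_ker Mᵀ.mulVecLin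
    have r1 : M.rank = Module.finrank ℂ (LinearMap.range M.mulVecLin) := rfl
    have r2 : Mᵀ.rank = Module.finrank ℂ (LinearMap.range Mᵀ.mulVecLin) := rfl
    simp only [Module.finrank_pi, Fintype.card_fin] at e1 e2
    omega
  have hkerMT : LinearMap.ker Mᵀ.mulVecLin = Submodule.span ℂ {star a} := by
    symm
    apply Submodule.eq_of_le_of_finrank_le
    · rw [Submodule.span_le, Set.singleton_subset_iff]
      simp only [SetLike.mem_coe, LinearMap.mem_ker, Matrix.mulVecLin_apply]
      rw [Matrix.mulVec_transpose]
      exact haM'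
    · rw [hkT, finrank_span_singleton hsa0]
  have hcol : ∀ q, ∃ c : ℂ, (fun p => M.adjugate p q) = c • a := by
    intro q
    have hmem : (fun p => M.adjugate p q) ∈ LinearMap.ker M.mulVecLin := by
      rw [LinearMap.mem_ker, Matrix.mulVecLin_apply]
      have : M.mulVec (fun p => M.adjugate p q) = fun i => (M * M.adjugate) i q := by
        funext i
        simp [Matrix.mulVec, Matrix.mul_apply, dotProduct]
      rw [this, Matrix.mul_adjugate, hdet]
      funext i; simp
    rw [hkerM, Submodule.mem_span_singleton] at hmem
    obtain ⟨c, hc⟩ := hmem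
    exact ⟨c, hc.symm⟩
  choose c hc using hcol
  obtain ⟨p₀, hp₀⟩ : ∃ p, a p ≠ 0 := Function.ne_iff.mp ha0
  have hrow : ∃ μ : ℂ, (fun q => M.adjugate p₀ q) = μ • star a := by
    have hmem : (fun q => M.adjugate p₀ q) ∈ LinearMap.ker Mᵀ.mulVecLin := by
      rw [LinearMap.mem_ker, Matrix.mulVecLin_apply, Matrix.mulVec_transpose]
      have : Matrix.vecMul (fun q => M.adjugate p₀ q) M = fun j => (M.adjugate * M) p₀ j := by
        funext j
        simp [Matrix.vecMul, Matrix.mul_apply, dotProduct]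
      rw [this, Matrix.adjugate_mul, hdet]
      funext j; simp
    rw [hkerMT, Submodule.mem_span_singleton] at hmem
    obtain ⟨μ, hμ⟩ := hmem
    exact ⟨μ, hμ.symm⟩
  obtain ⟨μ, hμ⟩ := hrow
  refine ⟨μ / a p₀, fun p q => ?_⟩
  have h1 : M.adjugate p q = c q * a p := congrFun (hc q) p
  have h2 : M.adjugate p₀ q = μ * (starRingEnd ℂ) (a q) := by
    have := congrFun hμ q
    simpa [Pi.star_apply] using this
  have h3 : c q * a p₀ = μ * (starRingEnd ℂ) (a q) := by
    have := congrFun (hc q) p₀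
    simp only [Pi.smul_apply, smul_eq_mul] at this
    rw [← this, h2]
  have hcq : c q = μ / a p₀ * (starRingEnd ℂ) (a q) := by
    field_simp
    linear_combination h3
  rw [h1, hcq]

/-- Let `U : ℝ → M_n(ℂ)` be differentiable (entrywise) at `t₀` with derivative
`i • A * U t₀` for a Hermitian `A`; if `U t₀` is unitary, the kernel of `1 - U t₀`
is one-dimensional, and `a` is a unit vector fixed by `U t₀`, then
`t ↦ det (1 - U t)` has derivative `-i · trace (adj (1 - U t₀)) · ⟨a, A a⟩` at `t₀`. -/
theorem stmt3 {n : ℕ} (U : ℝ → Matrix (Fin n) (Fin n) ℂ)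
    (A : Matrix (Fin n) (Fin n) ℂ) (hA : A.IsHermitian) (t₀ : ℝ)
    (hderiv : ∀ p q, HasDerivAt (fun t => U t p q) ((Complex.I • (A * U t₀)) p q) t₀)
    (hU : U t₀ ∈ Matrix.unitaryGroup (Fin n) ℂ)
    (hker : Module.finrank ℂ (LinearMap.ker (1 - U t₀).mulVecLin) = 1)
    (a : Fin n → ℂ) (ha : dotProduct (star a) a = 1)
    (haU : (U t₀).mulVec a = a) :
    HasDerivAt (fun t => (1 - U t).det)
      (-Complex.I * (1 - U t₀).adjugate.trace
        * dotProduct (star a) (A.mulVec a)) t₀ := by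
  set U₀ := U t₀ with hU₀
  set M := 1 - U₀ with hM
  -- a is nonzero
  have ha0 : a ≠ 0 := by
    intro h
    rw [h] at ha
    simp [dotProduct] at ha
  -- M kills a
  have haM : M.mulVec a = 0 := by
    rw [hM, Matrix.sub_mulVec, Matrix.one_mulVec, haU]
    simp
  -- star a kills M on the left
  have hUstar : (star U₀).mulVec a = a := by
    have h1 : star U₀ * U₀ = 1 := hU.1
    calc (star U₀).mulVec a = (star U₀).mulVec (U₀.mulVec a) := by rw [haU]
      _ = (star U₀ * U₀).mulVec a := by rw [Matrix.mulVec_mulVec]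
      _ = a := by rw [h1, Matrix.one_mulVec]
  have haM' : Matrix.vecMul (star a) M = 0 := by
    have h2 : Matrix.vecMul (star a) U₀ = star a := by
      have := congrArg star hUstar
      rwa [Matrix.star_mulVec, Matrix.star_eq_conjTranspose, Matrix.conjTranspose_conjTranspose] at this
    rw [hM, Matrix.vecMul_sub, Matrix.vecMul_one, h2]
    simp
  -- rank-one structure of adjugate
  obtain ⟨κ, hκ⟩ := my_adjugate_rank_one M hker a ha0 haM haM'
  -- derivative of det via the general lemma
  have hD : HasDerivAt (fun t => (1 - U t).det)
      ((1 - U t₀).adjugate * (-(Complex.I • (A * U₀)))).trace t₀ := by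
    apply my_hasDerivAt_det (fun t => 1 - U t) (-(Complex.I • (A * U₀))) t₀
    intro p q
    have := (hderiv p q).const_sub ((1 : Matrix (Fin n) (Fin n) ℂ) p q)
    convert this using 2 with t
    all_goals rfl
  -- trace of adjugate is κ
  have htr : M.adjugate.trace = κ := by
    rw [Matrix.trace]
    have : ∀ p : Fin n, M.adjugate.diag p = κ * ((starRingEnd ℂ) (a p) * a p) := by
      intro p; rw [Matrix.diag_apply, hκ p p]; ring
    rw [Finset.sum_congr rfl fun p _ => this p, ← Finset.mul_sum]
    have hss : ∑ p, (starRingEnd ℂ) (a p) * a p = 1 := by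
      have := ha
      simpa [dotProduct, Pi.star_apply] using this
    rw [hss, mul_one]
  -- compute the trace of the product
  have hBa : (A * U₀).mulVec a = A.mulVec a := by
    rw [← Matrix.mulVec_mulVec, haU]
  have htr2 : (M.adjugate * (-(Complex.I • (A * U₀)))).trace
      = -Complex.I * κ * dotProduct (star a) (A.mulVec a) := by
    rw [Matrix.trace]
    have step : ∀ p : Fin n, (M.adjugate * (-(Complex.I • (A * U₀)))).diag p
        = ∑ k, (κ * (starRingEnd ℂ) (a k) * a p) * (-(Complex.I * (A * U₀) k p)) := by
      intro p
      rw [Matrix.diag_apply, Matrix.mul_apply]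
      refine Finset.sum_congr rfl fun k _ => ?_
      rw [hκ p k]
      simp [smul_eq_mul]
    rw [Finset.sum_congr rfl fun p _ => step p, Finset.sum_comm]
    have step2 : ∀ k : Fin n, (∑ p, (κ * (starRingEnd ℂ) (a k) * a p) * (-(Complex.I * (A * U₀) k p)))
        = (-Complex.I * κ) * ((starRingEnd ℂ) (a k) * ((A * U₀).mulVec a k)) := by
      intro k
      rw [Matrix.mulVec, dotProduct, Finset.mul_sum, Finset.mul_sum]
      refine Finset.sum_congr rfl fun p _ => ?_
      ring
    rw [Finset.sum_congr rfl fun k _ => step2 k, ← Finset.mul_sum, hBa]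
    rw [dotProduct]
    simp only [Pi.star_apply, RCLike.star_def]
  rw [htr2] at hD
  rw [htr]
  exact hD
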